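/- For every ρ > 0, e^ρ E₁(ρ) < (ρ+1)/(ρ(ρ+2)). -/

import Mathlib

open MeasureTheory Real Set Filter

noncomputable def E1 (ρ : ℝ) : ℝ := ∫ t in Set.Ioi ρ, Real.exp (-t) / t

lemma aux_deriv (t : ℝ) (ht : 0 < t) :
    HasDerivAt (fun x => Real.exp (-x) * (x+1) / (x*(x+2)))
      (-(Real.exp (-t) / t) - 2 * Real.exp (-t) / (t*(t+2))^2) t := by
  have h1 : HasDerivAt (fun x : ℝ => Real.exp (-x) * (x+1)) (-Real.exp (-t) * (t+1) + Real.exp (-t)) t := by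
    have := ((Real.hasDerivAt_exp (-t)).comp t ((hasDerivAt_id t).neg)).mul
      ((hasDerivAt_id t).add_const 1)
    exact this.congr_deriv (by simp only [id, Function.comp]; ring)
  have h2 : HasDerivAt (fun x : ℝ => x*(x+2)) (2*t+2) t := by
    have := (hasDerivAt_id t).mul ((hasDerivAt_id t).add_const 2)
    exact this.congr_deriv (by simp only [id]; ring)
    
  have hne : t*(t+2) ≠ 0 := by positivity
  have := h1.div h2 hne
  have h0 : Real.exp (-t) ≠ 0 := Real.exp_ne_zero _
  refine this.congr_deriv ?_
  field_simp
  ring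

theorem stmt_6 (ρ : ℝ) (hρ : 0 < ρ) :
    Real.exp ρ * E1 ρ < (ρ + 1) / (ρ * (ρ + 2)) := by
  set D : ℝ → ℝ := fun t => 2 * Real.exp (-t) / (t*(t+2))^2 with hD_def
  set f : ℝ → ℝ := fun t => Real.exp (-t) / t with hf_def
  set G : ℝ → ℝ := fun x => Real.exp (-x) * (x+1) / (x*(x+2)) with hG_def
  have hexp : IntegrableOn (fun t => Real.exp (-t)) (Ioi ρ) := by
    simpa using exp_neg_integrableOn_Ioi ρ one_pos
  have hf : IntegrableOn f (Ioi ρ) := by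
    refine Integrable.mono (hexp.const_mul (1/ρ)) ?_ ?_
    · exact ((Real.measurable_exp.comp measurable_neg).div measurable_id).aestronglyMeasurable
    · filter_upwards [ae_restrict_mem measurableSet_Ioi] with t ht
      have ht' : ρ < t := ht
      have h1 : 0 < t := hρ.trans ht'
      rw [Real.norm_eq_abs, Real.norm_eq_abs, abs_of_nonneg (by positivity),
        abs_of_nonneg (by positivity)]
      rw [div_le_iff₀ h1]
      have : Real.exp (-t) = 1/ρ * Real.exp (-t) * ρ := by field_simp
      calc Real.exp (-t) = 1/ρ * Real.exp (-t) * ρ := this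
        _ ≤ 1/ρ * Real.exp (-t) * t := by
            apply mul_le_mul_of_nonneg_left ht'.le (by positivity)
  have hD : IntegrableOn D (Ioi ρ) := by
    refine Integrable.mono (hexp.const_mul (2/(ρ*(ρ+2))^2)) ?_ ?_
    · apply Measurable.aestronglyMeasurable
      exact (measurable_const.mul (Real.measurable_exp.comp measurable_neg)).div
        ((measurable_id.mul (measurable_id.add measurable_const)).pow measurable_const)
    · filter_upwards [ae_restrict_mem measurableSet_Ioi] with t ht
      have ht' : ρ < t := ht
      have h1 : 0 < t := hρ.trans ht'
      rw [Real.norm_eq_abs, Real.norm_eq_abs, abs_of_nonneg (by positivity),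
        abs_of_nonneg (by positivity)]
      rw [div_le_iff₀ (by positivity)]
      have hle : (ρ*(ρ+2))^2 ≤ (t*(t+2))^2 := by
        have h3 : ρ*(ρ+2) ≤ t*(t+2) := by nlinarith
        have h4 : 0 ≤ ρ*(ρ+2) := by positivity
        exact pow_le_pow_left₀ h4 h3 2
      calc 2 * Real.exp (-t) = 2 * Real.exp (-t) / (ρ*(ρ+2))^2 * (ρ*(ρ+2))^2 := by
            field_simp
        _ ≤ 2 * Real.exp (-t) / (ρ*(ρ+2))^2 * (t*(t+2))^2 :=
            mul_le_mul_of_nonneg_left hle (by positivity)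
        _ = 2 / (ρ*(ρ+2))^2 * Real.exp (-t) * (t*(t+2))^2 := by ring
  have hint : IntegrableOn (fun t => -(f t) - D t) (Ioi ρ) := hf.neg.sub hD
  have htend : Tendsto G atTop (nhds 0) := by
    apply squeeze_zero_norm' (a := fun x => Real.exp (-x)) _
      (Real.tendsto_exp_neg_atTop_nhds_zero)
    filter_upwards [eventually_ge_atTop (1:ℝ)] with x hx
    have hx0 : (0:ℝ) < x := by linarith
    rw [Real.norm_eq_abs, abs_of_nonneg (by positivity), hG_def]
    rw [div_le_iff₀ (by positivity)]
    have : x + 1 ≤ x * (x+2) := by nlinarith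
    nlinarith [Real.exp_pos (-x), mul_le_mul_of_nonneg_left this (Real.exp_pos (-x)).le]
  have hftc : ∫ t in Ioi ρ, (-(f t) - D t) = 0 - G ρ :=
    integral_Ioi_of_hasDerivAt_of_tendsto'
      (fun x hx => aux_deriv x (hρ.trans_le hx)) hint htend
  have h1 : ∫ t in Ioi ρ, (-(f t) - D t) =
      (∫ t in Ioi ρ, -(f t)) - ∫ t in Ioi ρ, D t := integral_sub hf.neg hD
  rw [h1, MeasureTheory.integral_neg] at hftc
  have hE1 : E1 ρ = G ρ - ∫ t in Ioi ρ, D t := by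
    have : E1 ρ = ∫ t in Ioi ρ, f t := rfl
    rw [this]; linarith [hftc]
  have hDpos : 0 < ∫ t in Ioi ρ, D t := by
    rw [setIntegral_pos_iff_support_of_nonneg_ae]
    · refine lt_of_lt_of_le ?_ (measure_mono (fun x hx => ⟨?_, hx⟩))
      · rw [Real.volume_Ioi]; exact ENNReal.zero_lt_top
      · have hx' : ρ < x := hx
        have : 0 < D x := by have : 0 < x := hρ.trans hx'; positivity
        exact ne_of_gt this
    · filter_upwards [ae_restrict_mem measurableSet_Ioi] with t ht
      have : ρ < t := ht
      have : 0 < t := hρ.trans this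
      positivity
    · exact hD
  have hGval : Real.exp ρ * G ρ = (ρ + 1) / (ρ * (ρ + 2)) := by
    rw [hG_def]
    simp only [Real.exp_neg]
    field_simp
  calc Real.exp ρ * E1 ρ < Real.exp ρ * G ρ := by
        rw [hE1]
        have := Real.exp_pos ρ
        nlinarith
    _ = (ρ + 1) / (ρ * (ρ + 2)) := hGval
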